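/- Let n, p, s be natural numbers with 1 ≤ 2p + s and 2p + s ≤ n. Then every intersecting family F ⊆ H^{(p,s)}(n) satisfies 2n · |F| ≤ (2p + s) · C(n, p) · C(n − p, s) · 2^s, where C denotes the binomial coefficient. -/

import Mathlib

/-- The family `H^{(p,s)}(n)`: subsets of `V(M_n) = Fin n × Bool` of cardinality `2p+s`
spanning exactly `p` edges of the perfect matching `M_n`
(whose `i`-th edge joins `(i, false)` and `(i, true)`). -/
def matchFamily (n p s : ℕ) : Finset (Finset (Fin n × Bool)) :=
  Finset.univ.filter (fun H : Finset (Fin n × Bool) =>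
    H.card = 2 * p + s ∧
    (Finset.univ.filter (fun i : Fin n => (i, false) ∈ H ∧ (i, true) ∈ H)).card = p)
/-- A family of finsets is intersecting if any two of its members intersect. -/
def IsIntersecting {α : Type*} [DecidableEq α] (F : Finset (Finset α)) : Prop :=
  ∀ A ∈ F, ∀ B ∈ F, (A ∩ B).Nonempty

set_option linter.unusedSectionVars false


open Finset Equiv


section helperperm
variable {α : Type*} [Fintype α] [DecidableEq α]

/-- a permutation mapping `s` onto `t` while fixing `u` pointwise. -/
lemma exists_perm_map_fix (s t u : Finset α) (hst : s.card = t.card)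
    (hsu : ∀ x ∈ s, x ∉ u) (htu : ∀ x ∈ t, x ∉ u) :
    ∃ π : Equiv.Perm α, (∀ x ∈ s, π x ∈ t) ∧ (∀ x ∈ u, π x = x) := by
  classical
  set β := {a : α // ¬ a ∈ u} with hβ
  have es : {y : β // y.1 ∈ s} ≃ {x : α // x ∈ s} :=
    Equiv.subtypeSubtypeEquivSubtype (fun {x} hx => hsu x hx)
  have et : {y : β // y.1 ∈ t} ≃ {x : α // x ∈ t} :=
    Equiv.subtypeSubtypeEquivSubtype (fun {x} hx => htu x hx)
  have hcard : Fintype.card {y : β // y.1 ∈ s} = Fintype.card {y : β // y.1 ∈ t} := by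
    rw [Fintype.card_congr es, Fintype.card_congr et, Fintype.card_coe, Fintype.card_coe, hst]
  have e' : {y : β // y.1 ∈ s} ≃ {y : β // y.1 ∈ t} := Fintype.equivOfCardEq hcard
  refine ⟨Equiv.Perm.subtypeCongr (1 : Equiv.Perm {a : α // a ∈ u}) e'.extendSubtype, ?_, ?_⟩
  · intro x hx
    have hxu : ¬ x ∈ u := hsu x hx
    rw [Equiv.Perm.subtypeCongr.apply]
    simp only [hxu, dif_neg, not_false_iff]
    exact (e'.extendSubtype_mem ⟨x, hxu⟩ hx)
  · intro x hx
    rw [Equiv.Perm.subtypeCongr.apply]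
    simp [hx]

end helperperm

variable {n : ℕ}

/-- wreath-product permutation of `Fin n × Bool`. -/
def wrp (π : Equiv.Perm (Fin n)) (ε : Fin n → Bool) : Equiv.Perm (Fin n × Bool) where
  toFun x := (π x.1, xor (ε x.1) x.2)
  invFun x := (π.symm x.1, xor (ε (π.symm x.1)) x.2)
  left_inv := by rintro ⟨i, b⟩; simp [Bool.xor_assoc]
  right_inv := by rintro ⟨i, b⟩; simp [Bool.xor_assoc]

lemma wrp_apply (π : Equiv.Perm (Fin n)) (ε : Fin n → Bool) (i : Fin n) (b : Bool) :
    wrp π ε (i, b) = (π i, xor (ε i) b) := rfl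

def wrG (n : ℕ) : Finset (Equiv.Perm (Fin n × Bool)) :=
  Finset.univ.image (fun q : Equiv.Perm (Fin n) × (Fin n → Bool) => wrp q.1 q.2)

lemma mem_wrG {g : Equiv.Perm (Fin n × Bool)} :
    g ∈ wrG n ↔ ∃ π ε, wrp π ε = g := by
  simp [wrG, Prod.exists]

lemma wrp_mul (π₁ π₂ : Equiv.Perm (Fin n)) (ε₁ ε₂ : Fin n → Bool) :
    wrp π₂ ε₂ * wrp π₁ ε₁ = wrp (π₂ * π₁) (fun i => xor (ε₁ i) (ε₂ (π₁ i))) := by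
  ext x
  · rfl
  · show (xor (ε₂ (π₁ x.1)) (xor (ε₁ x.1) x.2) : Bool) = (xor (xor (ε₁ x.1) (ε₂ (π₁ x.1))) x.2)
    cases ε₂ (π₁ x.1) <;> cases ε₁ x.1 <;> cases x.2 <;> rfl

lemma wrp_inv (π : Equiv.Perm (Fin n)) (ε : Fin n → Bool) :
    (wrp π ε)⁻¹ = wrp π⁻¹ (fun i => ε (π⁻¹ i)) := by
  ext x <;> rfl

lemma wrG_mul {g h : Equiv.Perm (Fin n × Bool)} (hg : g ∈ wrG n) (hh : h ∈ wrG n) :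
    g * h ∈ wrG n := by
  obtain ⟨π₂, ε₂, rfl⟩ := mem_wrG.mp hg
  obtain ⟨π₁, ε₁, rfl⟩ := mem_wrG.mp hh
  rw [wrp_mul]
  exact mem_wrG.mpr ⟨_, _, rfl⟩

lemma wrG_inv {g : Equiv.Perm (Fin n × Bool)} (hg : g ∈ wrG n) : g⁻¹ ∈ wrG n := by
  obtain ⟨π, ε, rfl⟩ := mem_wrG.mp hg
  rw [wrp_inv]
  exact mem_wrG.mpr ⟨_, _, rfl⟩

def fullSet (A : Finset (Fin n × Bool)) : Finset (Fin n) :=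
  Finset.univ.filter (fun i => (i, false) ∈ A ∧ (i, true) ∈ A)

def sglSet (A : Finset (Fin n × Bool)) : Finset (Fin n) :=
  Finset.univ.filter (fun i =>
    ((i, false) ∈ A ∧ ¬ (i, true) ∈ A) ∨ (¬ (i, false) ∈ A ∧ (i, true) ∈ A))

def chi (A : Finset (Fin n × Bool)) (i : Fin n) : Bool := decide ((i, true) ∈ A)

lemma mem_iff_struct (A : Finset (Fin n × Bool)) (i : Fin n) (b : Bool) :
    (i, b) ∈ A ↔ (i ∈ fullSet A ∨ (i ∈ sglSet A ∧ b = chi A i)) := by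
  by_cases hf : (i, false) ∈ A <;> by_cases ht : (i, true) ∈ A <;>
    cases b <;> simp [fullSet, sglSet, chi, hf, ht]

lemma fullSet_disj_sglSet (A : Finset (Fin n × Bool)) (i : Fin n) (hi : i ∈ sglSet A) :
    i ∉ fullSet A := by
  simp only [fullSet, sglSet, mem_filter, mem_univ, true_and] at *
  tauto

lemma ext_struct {A B : Finset (Fin n × Bool)} (hP : fullSet A = fullSet B)
    (hS : sglSet A = sglSet B) (hχ : ∀ i ∈ sglSet A, chi A i = chi B i) : A = B := by
  ext ⟨i, b⟩
  rw [mem_iff_struct, mem_iff_struct, hP, hS]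
  constructor
  · rintro (h | ⟨h1, h2⟩)
    · exact Or.inl h
    · exact Or.inr ⟨h1, h2.trans (hχ i (hS ▸ h1))⟩
  · rintro (h | ⟨h1, h2⟩)
    · exact Or.inl h
    · exact Or.inr ⟨h1, h2.trans (hχ i (hS ▸ h1)).symm⟩

lemma mem_image_perm {γ : Type*} [DecidableEq γ] (g : Equiv.Perm γ) (A : Finset γ) (v : γ) :
    v ∈ A.image ⇑g ↔ g.symm v ∈ A := by
  simp only [Finset.mem_image]
  constructor
  · rintro ⟨a, ha, rfl⟩; simpa using ha
  · intro h; exact ⟨g.symm v, h, by simp⟩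

lemma fullSet_image (π : Equiv.Perm (Fin n)) (ε : Fin n → Bool) (A : Finset (Fin n × Bool)) :
    fullSet (A.image ⇑(wrp π ε)) = (fullSet A).image ⇑π := by
  ext j
  rw [mem_image_perm π]
  have h1 : ∀ b, ((j, b) ∈ A.image ⇑(wrp π ε)) ↔
      (π.symm j, xor (ε (π.symm j)) b) ∈ A := by
    intro b; rw [mem_image_perm]; rfl
  simp only [fullSet, mem_filter, mem_univ, true_and, h1]
  cases hε : ε (π.symm j) <;> simp [hε] <;> tauto

lemma sglSet_image (π : Equiv.Perm (Fin n)) (ε : Fin n → Bool) (A : Finset (Fin n × Bool)) :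
    sglSet (A.image ⇑(wrp π ε)) = (sglSet A).image ⇑π := by
  ext j
  rw [mem_image_perm π]
  have h1 : ∀ b, ((j, b) ∈ A.image ⇑(wrp π ε)) ↔
      (π.symm j, xor (ε (π.symm j)) b) ∈ A := by
    intro b; rw [mem_image_perm]; rfl
  simp only [sglSet, mem_filter, mem_univ, true_and, h1]
  cases hε : ε (π.symm j) <;> simp [hε] <;> tauto

lemma sgl_mem_iff {A : Finset (Fin n × Bool)} {i : Fin n} (hi : i ∈ sglSet A) (b : Bool) :
    (i, b) ∈ A ↔ b = chi A i := by
  simp only [sglSet, mem_filter, mem_univ, true_and] at hi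
  rcases hi with ⟨h1, h2⟩ | ⟨h1, h2⟩
  · have hc : chi A i = false := by simp [chi, h2]
    cases b <;> simp [hc, h1, h2]
  · have hc : chi A i = true := by simp [chi, h2]
    cases b <;> simp [hc, h1, h2]

lemma chi_image (π : Equiv.Perm (Fin n)) (ε : Fin n → Bool) (A : Finset (Fin n × Bool))
    (i : Fin n) (hi : i ∈ sglSet A) :
    chi (A.image ⇑(wrp π ε)) (π i) = xor (ε i) (chi A i) := by
  have h1 : ((π i, true) ∈ A.image ⇑(wrp π ε)) ↔ (i, xor (ε i) true) ∈ A := by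
    rw [mem_image_perm]
    have h2 : (wrp π ε).symm (π i, true) = (i, xor (ε i) true) := by
      show (π.symm (π i), xor (ε (π.symm (π i))) true) = _
      simp
    rw [h2]
  rw [show chi (A.image ⇑(wrp π ε)) (π i) = decide ((π i, true) ∈ A.image ⇑(wrp π ε)) from rfl]
  rw [decide_eq_decide.mpr (h1.trans (sgl_mem_iff hi _))]
  rotate_left
  · exact instDecidableEqBool _ _
  rcases Bool.dichotomy (ε i) with hε | hε <;> rcases Bool.dichotomy (chi A i) with hc | hc <;>
    simp [hε, hc]

lemma mem_matchFamily_iff {n p s : ℕ} {A : Finset (Fin n × Bool)} :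
    A ∈ matchFamily n p s ↔ A.card = 2 * p + s ∧ (fullSet A).card = p := by
  simp [matchFamily, fullSet]

lemma sglSet_card {p s : ℕ} {A : Finset (Fin n × Bool)} (hA : A ∈ matchFamily n p s) :
    (sglSet A).card = s := by
  obtain ⟨hcard, hfull⟩ := mem_matchFamily_iff.mp hA
  have hfib : ∀ i : Fin n, (A.filter (fun v => v.1 = i)).card =
      (if i ∈ fullSet A then 2 else 0) + (if i ∈ sglSet A then 1 else 0) := by
    intro i
    have he : A.filter (fun v => v.1 = i)
        = ({(i, false), (i, true)} : Finset (Fin n × Bool)).filter (· ∈ A) := by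
      ext ⟨j, b⟩
      simp only [Finset.mem_filter, Finset.mem_insert, Finset.mem_singleton]
      cases b <;> constructor <;> rintro ⟨h1, h2⟩ <;> simp_all <;> tauto
    rw [he]
    by_cases h1 : (i, false) ∈ A <;> by_cases h2 : (i, true) ∈ A <;>
      simp [Finset.filter_insert, Finset.filter_singleton, h1, h2, fullSet, sglSet]
  have hsum : A.card = ∑ i : Fin n, (A.filter (fun v => v.1 = i)).card :=
    Finset.card_eq_sum_card_fiberwise (fun x _ => Finset.mem_univ x.1)
  rw [Finset.sum_congr rfl (fun i _ => hfib i), Finset.sum_add_distrib] at hsum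
  have h2 : ∑ i : Fin n, (if i ∈ fullSet A then 2 else 0) = 2 * (fullSet A).card := by
    rw [Finset.sum_ite_mem, Finset.univ_inter, Finset.sum_const, smul_eq_mul, mul_comm]
  have h3 : ∑ i : Fin n, (if i ∈ sglSet A then 1 else 0) = (sglSet A).card := by
    rw [Finset.sum_ite_mem, Finset.univ_inter, Finset.sum_const, smul_eq_mul, mul_one]
  rw [h2, h3, hcard, hfull] at hsum
  omega

lemma matchFamily_image {p s : ℕ} (π : Equiv.Perm (Fin n)) (ε : Fin n → Bool)
    {A : Finset (Fin n × Bool)} (hA : A ∈ matchFamily n p s) :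
    A.image ⇑(wrp π ε) ∈ matchFamily n p s := by
  obtain ⟨h1, h2⟩ := mem_matchFamily_iff.mp hA
  refine mem_matchFamily_iff.mpr ⟨?_, ?_⟩
  · rw [Finset.card_image_of_injective _ (wrp π ε).injective, h1]
  · rw [fullSet_image, Finset.card_image_of_injective _ π.injective, h2]

lemma image_image_perm {γ : Type*} [DecidableEq γ] (g h : Equiv.Perm γ) (A : Finset γ) :
    (A.image ⇑h).image ⇑g = A.image ⇑(g * h) := by
  rw [Finset.image_image]; rfl

lemma matchFamily_trans {p s : ℕ} {A B : Finset (Fin n × Bool)}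
    (hA : A ∈ matchFamily n p s) (hB : B ∈ matchFamily n p s) :
    ∃ g ∈ wrG n, A.image ⇑g = B := by
  classical
  have hcards : ∀ {C : Finset (Fin n × Bool)}, C ∈ matchFamily n p s → (fullSet C).card = p :=
    fun hC => (mem_matchFamily_iff.mp hC).2
  -- step 1
  obtain ⟨π₁, hπ₁, -⟩ := exists_perm_map_fix (fullSet A) (fullSet B) ∅
    (by rw [hcards hA, hcards hB]) (by simp) (by simp)
  set g₁ := wrp π₁ (fun _ => false) with hg₁
  set A₁ := A.image ⇑g₁ with hA₁def
  have hA₁ : A₁ ∈ matchFamily n p s := matchFamily_image _ _ hA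
  have hfull₁ : fullSet A₁ = fullSet B := by
    rw [hA₁def, hg₁, fullSet_image]
    apply Finset.eq_of_subset_of_card_le
    · intro j hj
      obtain ⟨i, hi, rfl⟩ := Finset.mem_image.mp hj
      exact hπ₁ i hi
    · rw [Finset.card_image_of_injective _ π₁.injective, hcards hA, hcards hB]
  -- step 2
  obtain ⟨π₂, hπ₂, hπ₂fix⟩ := exists_perm_map_fix (sglSet A₁) (sglSet B) (fullSet B)
    (by rw [sglSet_card hA₁, sglSet_card hB])
    (fun x hx => hfull₁ ▸ fullSet_disj_sglSet A₁ x hx)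
    (fun x hx => fullSet_disj_sglSet B x hx)
  set g₂ := wrp π₂ (fun _ => false) with hg₂
  set A₂ := A₁.image ⇑g₂ with hA₂def
  have hA₂ : A₂ ∈ matchFamily n p s := matchFamily_image _ _ hA₁
  have hfull₂ : fullSet A₂ = fullSet B := by
    rw [hA₂def, hg₂, fullSet_image, hfull₁]
    have : ∀ x ∈ fullSet B, π₂ x = id x := fun x hx => hπ₂fix x hx
    rw [Finset.image_congr this, Finset.image_id]
  have hsgl₂ : sglSet A₂ = sglSet B := by
    rw [hA₂def, hg₂, sglSet_image]
    apply Finset.eq_of_subset_of_card_le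
    · intro j hj
      obtain ⟨i, hi, rfl⟩ := Finset.mem_image.mp hj
      exact hπ₂ i hi
    · rw [Finset.card_image_of_injective _ π₂.injective, sglSet_card hA₁, sglSet_card hB]
  -- step 3
  set ε : Fin n → Bool := fun i => xor (chi A₂ i) (chi B i) with hε
  set g₃ := wrp 1 ε with hg₃
  set A₃ := A₂.image ⇑g₃ with hA₃def
  have hfull₃ : fullSet A₃ = fullSet B := by
    rw [hA₃def, hg₃, fullSet_image, ← hfull₂]
    have : ∀ x ∈ fullSet A₂, (1 : Equiv.Perm (Fin n)) x = id x := fun x _ => rfl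
    rw [Finset.image_congr this, Finset.image_id]
  have hsgl₃ : sglSet A₃ = sglSet B := by
    rw [hA₃def, hg₃, sglSet_image, ← hsgl₂]
    have : ∀ x ∈ sglSet A₂, (1 : Equiv.Perm (Fin n)) x = id x := fun x _ => rfl
    rw [Finset.image_congr this, Finset.image_id]
  have hchi₃ : ∀ i ∈ sglSet A₃, chi A₃ i = chi B i := by
    intro i hi
    have hi₂ : i ∈ sglSet A₂ := by rw [hsgl₂, ← hsgl₃]; exact hi
    have := chi_image (1 : Equiv.Perm (Fin n)) ε A₂ i hi₂
    rw [show (1 : Equiv.Perm (Fin n)) i = i from rfl] at this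
    rw [← hA₃def] at this
    rw [this, hε]
    cases hc : chi A₂ i <;> cases hcb : chi B i <;> simp [hc, hcb]
  have hfinal : A₃ = B := ext_struct hfull₃ hsgl₃ (fun i hi => hchi₃ i hi)
  refine ⟨g₃ * (g₂ * g₁), ?_, ?_⟩
  · apply wrG_mul (mem_wrG.mpr ⟨_, _, rfl⟩)
    exact wrG_mul (mem_wrG.mpr ⟨_, _, rfl⟩) (mem_wrG.mpr ⟨_, _, rfl⟩)
  · rw [← hfinal, hA₃def, hA₂def, hA₁def, image_image_perm, image_image_perm, mul_assoc]

lemma matchFamily_card_le (n p s : ℕ) :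
    (matchFamily n p s).card ≤ n.choose p * ((n - p).choose s * 2 ^ s) := by
  classical
  set T : Finset (Σ _ : Finset (Fin n), Σ _ : Finset (Fin n), Finset (Fin n)) :=
    (Finset.univ.powersetCard p).sigma
      (fun P => (((Finset.univ : Finset (Fin n)) \ P).powersetCard s).sigma (fun S => S.powerset)) with hT
  have hTcard : T.card = n.choose p * ((n - p).choose s * 2 ^ s) := by
    rw [hT, Finset.card_sigma]
    have h1 : ∀ P ∈ Finset.univ.powersetCard p,
        ((((Finset.univ : Finset (Fin n)) \ P).powersetCard s).sigma (fun S => S.powerset)).card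
          = (n - p).choose s * 2 ^ s := by
      intro P hP
      rw [Finset.card_sigma]
      obtain ⟨hPsub, hPcard⟩ := Finset.mem_powersetCard.mp hP
      have h2 : ∀ S ∈ ((Finset.univ : Finset (Fin n)) \ P).powersetCard s, S.powerset.card = 2 ^ s := by
        intro S hS
        rw [Finset.card_powerset, (Finset.mem_powersetCard.mp hS).2]
      rw [Finset.sum_congr rfl h2, Finset.sum_const, smul_eq_mul, Finset.card_powersetCard,
        Finset.card_sdiff_of_subset (Finset.subset_univ P), Finset.card_univ, Fintype.card_fin, hPcard]
    rw [Finset.sum_congr rfl h1, Finset.sum_const, smul_eq_mul, Finset.card_powersetCard,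
      Finset.card_univ, Fintype.card_fin]
  rw [← hTcard]
  apply Finset.card_le_card_of_injOn
    (fun A => ⟨fullSet A, sglSet A, (sglSet A).filter (fun i => chi A i = true)⟩)
  · intro A hA
    obtain ⟨hcard, hfull⟩ := mem_matchFamily_iff.mp hA
    simp only [hT, Finset.mem_coe, Finset.mem_sigma, Finset.mem_powersetCard, Finset.mem_powerset]
    refine ⟨⟨Finset.subset_univ _, hfull⟩, ⟨?_, sglSet_card hA⟩, Finset.filter_subset _ _⟩
    intro i hi
    rw [Finset.mem_sdiff]
    exact ⟨Finset.mem_univ i, fullSet_disj_sglSet A i hi⟩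
  · intro A hA A' hA' heq
    simp only [Sigma.mk.inj_iff, heq_eq_eq] at heq
    obtain ⟨h1, h2, h3⟩ := heq
    apply ext_struct h1 h2
    intro i hi
    have hi' : i ∈ sglSet A' := h2 ▸ hi
    have : (i ∈ (sglSet A).filter (fun i => chi A i = true))
        ↔ (i ∈ (sglSet A').filter (fun i => chi A' i = true)) := by rw [h3]
    simp only [Finset.mem_filter, hi, hi', true_and] at this
    cases hc : chi A i
    · cases hc' : chi A' i
      · rfl
      · simp [hc, hc'] at this
    · cases hc' : chi A' i
      · simp [hc, hc'] at this
      · rfl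

-- ===== counting lemma =====



variable {α : Type*} [Fintype α] [DecidableEq α]

lemma count_lemma (Hfam F : Finset (Finset α)) (hFH : F ⊆ Hfam) (hint : IsIntersecting F)
    (G : Finset (Equiv.Perm α))
    (hmul : ∀ g ∈ G, ∀ h ∈ G, g * h ∈ G)
    (hinv : ∀ g ∈ G, g⁻¹ ∈ G)
    (hpres : ∀ g ∈ G, ∀ A ∈ Hfam, A.image (⇑g) ∈ Hfam)
    (htrans : ∀ A ∈ Hfam, ∀ B ∈ Hfam, ∃ g ∈ G, A.image (⇑g) = B)
    (m t : ℕ) (B : Fin m → Finset α) (hB : ∀ j, B j ∈ Hfam)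
    (hKat : ∀ S : Finset (Fin m),
      (∀ j ∈ S, ∀ j' ∈ S, (B j ∩ B j').Nonempty) → S.card ≤ t) :
    m * F.card ≤ t * Hfam.card := by
  classical
  rcases F.eq_empty_or_nonempty with hFe | ⟨A0, hA0⟩
  · simp [hFe]
  have hA0H : A0 ∈ Hfam := hFH hA0
  obtain ⟨g0, hg0, -⟩ := htrans A0 hA0H A0 hA0H
  have hGne : 0 < G.card := card_pos.mpr ⟨g0, hg0⟩
  set fib : Fin m → Finset α → ℕ :=
    fun j H => (G.filter (fun (g : Equiv.Perm α) => (B j).image (⇑g) = H)).card with hfib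
  have fib_eq : ∀ j, ∀ H ∈ Hfam, ∀ H' ∈ Hfam, fib j H = fib j H' := by
    intro j H hH H' hH'
    obtain ⟨u, hu, huH⟩ := htrans H hH H' hH'
    apply Finset.card_bij (fun g _ => u * g)
    · intro g hg
      simp only [mem_filter] at hg ⊢
      refine ⟨hmul u hu g hg.1, ?_⟩
      have h2 : (B j).image (⇑(u * g)) = ((B j).image (⇑g)).image (⇑u) := by
        rw [Finset.image_image]; rfl
      rw [h2, hg.2, huH]
    · intro g1 h1 g2 h2 hgg
      exact mul_left_cancel hgg
    · intro g' hg'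
      simp only [mem_filter] at hg'
      refine ⟨u⁻¹ * g', mem_filter.mpr ⟨hmul u⁻¹ (hinv u hu) g' hg'.1, ?_⟩,
        mul_inv_cancel_left u g'⟩
      have h2 : (B j).image (⇑(u⁻¹ * g')) = ((B j).image (⇑g')).image (⇑u⁻¹) := by
        rw [Finset.image_image]; rfl
      rw [h2, hg'.2, ← huH, Finset.image_image]
      have hid : (⇑u⁻¹ ∘ ⇑u) = id := by ext x; simp
      rw [hid, Finset.image_id]
  have fib_tot : ∀ j, ∑ H ∈ Hfam, fib j H = G.card := by
    intro j
    exact (Finset.card_eq_sum_card_fiberwise (fun g hg => hpres g hg (B j) (hB j))).symm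
  have fib_const : ∀ j, ∀ H ∈ Hfam, Hfam.card * fib j H = G.card := by
    intro j H hH
    rw [← fib_tot j]
    rw [Finset.sum_congr rfl (fun H' hH' => fib_eq j H' hH' H hH), Finset.sum_const, smul_eq_mul]
  -- main double count
  set T : ℕ := ∑ g ∈ G, ((Finset.univ : Finset (Fin m)).filter
      (fun j => (B j).image (⇑g) ∈ F)).card with hT
  have upper : T ≤ G.card * t := by
    apply Finset.sum_le_card_nsmul
    intro g hg
    apply hKat
    intro j hj j' hj'
    simp only [mem_filter] at hj hj'
    have h3 := hint _ hj.2 _ hj'.2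
    rw [← Finset.image_inter _ _ (g.injective)] at h3
    obtain ⟨x, hx⟩ := h3
    obtain ⟨y, hy, -⟩ := Finset.mem_image.mp hx
    exact ⟨y, hy⟩
  have exchange : T = ∑ j : Fin m, (G.filter (fun (g : Equiv.Perm α) => (B j).image (⇑g) ∈ F)).card := by
    rw [hT]
    simp only [Finset.card_filter]
    rw [Finset.sum_comm]
  have per_j : ∀ j : Fin m, (G.filter (fun (g : Equiv.Perm α) => (B j).image (⇑g) ∈ F)).card
      = ∑ H ∈ F, fib j H := by
    intro j
    rw [Finset.card_eq_sum_card_fiberwise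
      (s := G.filter (fun (g : Equiv.Perm α) => (B j).image (⇑g) ∈ F))
      (f := fun (g : Equiv.Perm α) => (B j).image (⇑g)) (t := F) (fun g hg => (mem_filter.mp hg).2)]
    apply Finset.sum_congr rfl
    intro H hH
    congr 1
    rw [Finset.filter_filter]
    apply Finset.filter_congr
    intro g hg
    constructor
    · rintro ⟨-, h⟩; exact h
    · intro h
      refine ⟨?_, h⟩
      simp only [h]
      exact hH
  have key : Hfam.card * T = m * F.card * G.card := by
    rw [exchange, Finset.mul_sum]
    have hcc : ∀ j : Fin m, Hfam.card * ∑ H ∈ F, fib j H = F.card * G.card := by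
      intro j
      rw [Finset.mul_sum,
        Finset.sum_congr rfl (fun H hH => fib_const j H (hFH hH)), Finset.sum_const,
        smul_eq_mul]
    calc ∑ j : Fin m, Hfam.card * (G.filter (fun (g : Equiv.Perm α) => (B j).image (⇑g) ∈ F)).card
        = ∑ j : Fin m, F.card * G.card := by
          apply Finset.sum_congr rfl
          intro j hj
          rw [per_j j]; exact hcc j
      _ = m * F.card * G.card := by
          rw [Finset.sum_const, smul_eq_mul, Finset.card_univ, Fintype.card_fin, mul_assoc]
  have final : m * F.card * G.card ≤ t * Hfam.card * G.card := by
    calc m * F.card * G.card = Hfam.card * T := key.symm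
      _ ≤ Hfam.card * (G.card * t) := Nat.mul_le_mul_left _ (by simpa using upper)
      _ = t * Hfam.card * G.card := by ring
  exact Nat.le_of_mul_le_mul_right final hGne

-- ===== windows =====


lemma mod_inj_small {N x r r' : ℕ} (hr : r < N) (hr' : r' < N)
    (h : (x + r) % N = (x + r') % N) : r = r' := by
  have h1 : r ≡ r' [MOD N] := Nat.ModEq.add_left_cancel' x h
  rcases le_total r r' with hle | hle
  · have h2 := (Nat.modEq_iff_dvd' hle).mp h1
    have h3 := Nat.eq_zero_of_dvd_of_lt h2 (by omega)
    omega
  · have h2 := (Nat.modEq_iff_dvd' hle).mp h1.symm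
    have h3 := Nat.eq_zero_of_dvd_of_lt h2 (by omega)
    omega

lemma dvd_small_cases {N v : ℕ} (hN : 0 < N) (h : N ∣ v) (hv : v < 2 * N) : v = 0 ∨ v = N := by
  obtain ⟨q, rfl⟩ := h
  match q with
  | 0 => left; rfl
  | 1 => right; exact (mul_one N)
  | (q + 2) =>
    exfalso
    have h2 : 2 * N ≤ N * (q + 2) := by
      calc 2 * N = N * 2 := by ring
        _ ≤ N * (q + 2) := Nat.mul_le_mul_left _ (by omega)
    omega

section windows

variable {n k : ℕ} (vA : ℕ → Fin n × Bool)

def Wnd (k x : ℕ) : Finset (Fin n × Bool) := (Finset.range k).image (fun r => vA (x + r))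

lemma mem_Wnd {k x : ℕ} {v : Fin n × Bool} :
    v ∈ Wnd vA k x ↔ ∃ r < k, vA (x + r) = v := by
  simp [Wnd]

variable (hinj : ∀ a b, vA a = vA b → a % (2 * n) = b % (2 * n))
    (hper : ∀ a, vA (a % (2 * n)) = vA a)

include hinj in
lemma Wnd_card (hk : k ≤ 2 * n) (hn : 0 < n) (x : ℕ) : (Wnd vA k x).card = k := by
  rw [Wnd, Finset.card_image_of_injOn, Finset.card_range]
  intro r hr r' hr' h
  simp only [Finset.mem_coe, Finset.mem_range] at hr hr'
  exact mod_inj_small (by omega) (by omega) (hinj _ _ h)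

include hper in
lemma Wnd_congr {x y : ℕ} (h : x % (2 * n) = y % (2 * n)) : Wnd vA k x = Wnd vA k y := by
  unfold Wnd
  apply Finset.image_congr
  intro r _
  show vA (x + r) = vA (y + r)
  have h2 : (x + r) % (2 * n) = (y + r) % (2 * n) := Nat.ModEq.add_right r h
  rw [← hper (x + r), ← hper (y + r), h2]

include hinj in
lemma Wnd_disj_shift (hkn : k ≤ n) (x : ℕ) :
    Wnd vA k x ∩ Wnd vA k (x + k) = ∅ := by
  by_contra h
  obtain ⟨v, hv⟩ := Finset.nonempty_iff_ne_empty.mpr h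
  rw [Finset.mem_inter, mem_Wnd, mem_Wnd] at hv
  obtain ⟨⟨r1, hr1, he1⟩, ⟨r2, hr2, he2⟩⟩ := hv
  have h1 := hinj _ _ (he1.trans he2.symm)
  have h2 : r1 ≡ k + r2 [MOD 2 * n] := by
    have h3 : x + r1 ≡ x + (k + r2) [MOD 2 * n] := by
      rw [Nat.ModEq, h1]; ring_nf
    exact Nat.ModEq.add_left_cancel' x h3
  have h3 := (Nat.modEq_iff_dvd' (by omega)).mp h2
  have h4 := Nat.eq_zero_of_dvd_of_lt h3 (by omega)
  omega

include hinj in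
lemma Wnd_close {x y : ℕ} (hne : (Wnd vA k x ∩ Wnd vA k y).Nonempty) :
    ∃ r1 r2, r1 < k ∧ r2 < k ∧ (x + r1) % (2 * n) = (y + r2) % (2 * n) := by
  obtain ⟨v, hv⟩ := hne
  rw [Finset.mem_inter, mem_Wnd, mem_Wnd] at hv
  obtain ⟨⟨r1, hr1, he1⟩, ⟨r2, hr2, he2⟩⟩ := hv
  exact ⟨r1, r2, hr1, hr2, hinj _ _ (he1.trans he2.symm)⟩

include hinj hper in
lemma katona_bound (hk1 : 1 ≤ k) (hkn : k ≤ n) (hn : 0 < n)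
    (c m t : ℕ) (hc : c * m = 2 * n) (hck : c * t = k)
    (S : Finset (Fin m))
    (hS : ∀ j ∈ S, ∀ j' ∈ S, (Wnd vA k (c * j.val) ∩ Wnd vA k (c * j'.val)).Nonempty) :
    S.card ≤ t := by
  rcases S.eq_empty_or_nonempty with rfl | ⟨j0, hj0⟩
  · simp
  have hc0 : 0 < c := by
    rcases Nat.eq_zero_or_pos c with rfl | h
    · omega
    · exact h
  have hN : 0 < 2 * n := by omega
  set N := 2 * n with hNdef
  have hcjlt : ∀ j : Fin m, c * j.val < N := by
    intro j
    calc c * j.val < c * m := (Nat.mul_lt_mul_left hc0).mpr j.isLt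
      _ = N := hc
  set D : Fin m → ℕ := fun j => (c * j.val + N - c * j0.val) % N with hD
  have hDlt : ∀ j, D j < N := fun j => Nat.mod_lt _ hN
  have hDdvd : ∀ j, c ∣ D j := by
    intro j
    rw [hD]
    rw [Nat.dvd_mod_iff ⟨m, hc.symm⟩]
    have h1 : c ∣ c * j.val + N := ⟨j.val + m, by rw [← hc]; ring⟩
    exact Nat.dvd_sub h1 ⟨j0.val, rfl⟩
  have hKEY : ∀ j, (D j + c * j0.val) % N = (c * j.val) % N := by
    intro j
    have h2 : (c * j.val + N - c * j0.val) + c * j0.val = c * j.val + N := by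
      have := le_of_lt (hcjlt j0); omega
    calc (D j + c * j0.val) % N
        = ((c * j.val + N - c * j0.val) % N + c * j0.val) % N := rfl
      _ = ((c * j.val + N - c * j0.val) + c * j0.val) % N := by rw [Nat.mod_add_mod]
      _ = (c * j.val + N) % N := by rw [h2]
      _ = (c * j.val) % N := by rw [Nat.add_mod_right]
  have hDinj : ∀ j j' : Fin m, D j = D j' → j = j' := by
    intro j j' h
    have h1 : (c * j.val) % N = (c * j'.val) % N := by
      rw [← hKEY j, ← hKEY j', h]
    rw [Nat.mod_eq_of_lt (hcjlt j), Nat.mod_eq_of_lt (hcjlt j')] at h1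
    exact Fin.ext (Nat.eq_of_mul_eq_mul_left hc0 h1)
  have hclose : ∀ j ∈ S, D j < k ∨ N - k < D j := by
    intro j hj
    obtain ⟨r1, r2, hr1, hr2, hmod⟩ := Wnd_close vA hinj (hS j hj j0 hj0)
    have h1 : (D j + r1 + c * j0.val) % N = (r2 + c * j0.val) % N := by
      calc (D j + r1 + c * j0.val) % N
          = ((D j + c * j0.val) % N + r1) % N := by
            rw [Nat.mod_add_mod]; ring_nf
        _ = ((c * j.val) % N + r1) % N := by rw [hKEY j]
        _ = (c * j.val + r1) % N := by rw [Nat.mod_add_mod]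
        _ = (c * j0.val + r2) % N := hmod
        _ = (r2 + c * j0.val) % N := by ring_nf
    have h2 : D j + r1 ≡ r2 [MOD N] := Nat.ModEq.add_right_cancel' _ h1
    rcases le_total (D j + r1) r2 with hle | hle
    · have h3 := (Nat.modEq_iff_dvd' hle).mp h2
      have h4 := Nat.eq_zero_of_dvd_of_lt h3 (by omega)
      omega
    · have hdvd := (Nat.modEq_iff_dvd' hle).mp h2.symm
      have hbound : D j + r1 - r2 < 2 * N := by
        have := hDlt j; omega
      rcases dvd_small_cases hN hdvd hbound with h0 | hNeq
      · left; omega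
      · right; omega
  have hdisj : ∀ j j' : Fin m, D j < k → D j' = N - k + D j →
      Wnd vA k (c * j'.val) ∩ Wnd vA k (c * j.val) = ∅ := by
    intro j j' h1 h3
    have hmodeq : (c * j'.val + k) % N = (c * j.val) % N := by
      have e1 : (c * j'.val + k) % N = ((D j' + c * j0.val) + k) % N := by
        conv_lhs => rw [← Nat.mod_add_mod, ← hKEY j', Nat.mod_add_mod]
      have e2 : (D j' + c * j0.val) + k = N + (D j + c * j0.val) := by
        have := hkn; omega
      rw [e1, e2, Nat.add_mod_left, hKEY j]
    have hcongr : Wnd vA k (c * j.val) = Wnd vA k (c * j'.val + k) :=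
      Wnd_congr vA hper hmodeq.symm
    rw [hcongr]
    exact Wnd_disj_shift vA hinj hkn _
  set emap : Fin m → ℕ := fun j => if D j < k then D j / c else (D j - (N - k)) / c
    with hemap
  have hdvd2 : ∀ j, c ∣ D j - (N - k) := by
    intro j
    exact Nat.dvd_sub (hDdvd j) (Nat.dvd_sub ⟨m, hc.symm⟩ ⟨t, hck.symm⟩)
  have hmaps : ∀ j ∈ S, emap j ∈ Finset.range t := by
    intro j hj
    rw [Finset.mem_range, hemap]
    by_cases h1 : D j < k
    · simp only [h1, if_true]
      obtain ⟨q, hq⟩ := hDdvd j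
      rw [hq, Nat.mul_div_cancel_left _ hc0]
      have h5 : c * q < c * t := by rw [← hq, hck]; exact h1
      exact Nat.lt_of_mul_lt_mul_left h5
    · simp only [h1, if_false]
      obtain ⟨q, hq⟩ := hdvd2 j
      rw [hq, Nat.mul_div_cancel_left _ hc0]
      have hlt : D j - (N - k) < k := by have := hDlt j; omega
      have h5 : c * q < c * t := by rw [← hq, hck]; exact hlt
      exact Nat.lt_of_mul_lt_mul_left h5
  have hinjmap : ∀ j ∈ S, ∀ j' ∈ S, emap j = emap j' → j = j' := by
    intro j hj j' hj' heq
    rw [hemap] at heq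
    simp only at heq
    by_cases h1 : D j < k <;> by_cases h2 : D j' < k
    · rw [if_pos h1, if_pos h2] at heq
      apply hDinj
      have a1 : c * (D j / c) = D j := Nat.mul_div_cancel' (hDdvd j)
      have a2 : c * (D j' / c) = D j' := Nat.mul_div_cancel' (hDdvd j')
      rw [heq] at a1
      omega
    · rw [if_pos h1, if_neg h2] at heq
      exfalso
      have hgt : N - k < D j' := by rcases hclose j' hj' with h | h; omega; exact h
      have a1 : c * (D j / c) = D j := Nat.mul_div_cancel' (hDdvd j)
      have a2 : c * ((D j' - (N - k)) / c) = D j' - (N - k) := Nat.mul_div_cancel' (hdvd2 j')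
      rw [heq] at a1
      have he : D j' = N - k + D j := by omega
      have hd := hdisj j j' h1 he
      obtain ⟨v, hv⟩ := hS j' hj' j hj
      rw [hd] at hv
      exact absurd hv (Finset.notMem_empty v)
    · rw [if_neg h1, if_pos h2] at heq
      exfalso
      have hgt : N - k < D j := by rcases hclose j hj with h | h; omega; exact h
      have a1 : c * (D j' / c) = D j' := Nat.mul_div_cancel' (hDdvd j')
      have a2 : c * ((D j - (N - k)) / c) = D j - (N - k) := Nat.mul_div_cancel' (hdvd2 j)
      rw [← heq] at a1
      have he : D j = N - k + D j' := by omega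
      have hd := hdisj j' j h2 he
      obtain ⟨v, hv⟩ := hS j hj j' hj'
      rw [hd] at hv
      exact absurd hv (Finset.notMem_empty v)
    · rw [if_neg h1, if_neg h2] at heq
      have hgt : N - k < D j := by rcases hclose j hj with h | h; omega; exact h
      have hgt' : N - k < D j' := by rcases hclose j' hj' with h | h; omega; exact h
      apply hDinj
      have a1 : c * ((D j - (N - k)) / c) = D j - (N - k) := Nat.mul_div_cancel' (hdvd2 j)
      have a2 : c * ((D j' - (N - k)) / c) = D j' - (N - k) := Nat.mul_div_cancel' (hdvd2 j')
      rw [heq] at a1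
      omega
  calc S.card ≤ (Finset.range t).card := Finset.card_le_card_of_injOn emap hmaps hinjmap
    _ = t := Finset.card_range t

end windows

def hIdx (n : ℕ) (hn : 0 < n) (a : ℕ) : Fin n :=
  ⟨(a % (2 * n)) / 2, by
    have h := Nat.mod_lt a (show 0 < 2 * n by omega)
    omega⟩

def vtx (n : ℕ) (hn : 0 < n) (d : ℕ) (a : ℕ) : Fin n × Bool :=
  if a % 2 = 0 then (hIdx n hn a, false) else (hIdx n hn (a + (2 * n - d)), true)

lemma parity_mod (n a : ℕ) : (a % (2 * n)) % 2 = a % 2 :=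
  Nat.mod_mod_of_dvd a ⟨n, rfl⟩

lemma vtx_eq_false_iff {n : ℕ} (hn : 0 < n) (d : ℕ) (a : ℕ) (i : Fin n) :
    vtx n hn d a = (i, false) ↔ a % (2 * n) = 2 * i.val := by
  have hpar := parity_mod n a
  unfold vtx
  by_cases h : a % 2 = 0
  · rw [if_pos h]
    rw [Prod.mk.injEq, Fin.ext_iff]
    unfold hIdx
    simp only [and_true]
    constructor
    · intro h2; omega
    · intro h2; omega
  · rw [if_neg h]
    constructor
    · intro h2; exact absurd (congrArg Prod.snd h2) (by simp)
    · intro h2; exact absurd h (by omega)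

lemma vtx_eq_true_iff {n : ℕ} (hn : 0 < n) {d : ℕ} (hd2 : d % 2 = 1) (hdn : d ≤ 2 * n)
    (a : ℕ) (i : Fin n) :
    vtx n hn d a = (i, true) ↔ ((a + (2 * n - d)) % (2 * n) = 2 * i.val ∧ a % 2 = 1) := by
  have hpar := parity_mod n (a + (2 * n - d))
  have hl := Nat.mod_lt (a + (2 * n - d)) (show 0 < 2 * n by omega)
  unfold vtx
  by_cases h : a % 2 = 0
  · rw [if_pos h]
    constructor
    · intro h2; exact absurd (congrArg Prod.snd h2) (by simp)
    · intro h2; exact absurd h2.2 (by omega)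
  · rw [if_neg h]
    rw [Prod.mk.injEq, Fin.ext_iff]
    unfold hIdx
    simp only [and_true]
    constructor
    · intro h2
      refine ⟨by omega, by omega⟩
    · intro h2; omega

lemma vtx_inj {n : ℕ} (hn : 0 < n) {d : ℕ} (hd2 : d % 2 = 1) (hdn : d ≤ 2 * n) :
    ∀ a b, vtx n hn d a = vtx n hn d b → a % (2 * n) = b % (2 * n) := by
  intro a b h
  have hpa := parity_mod n a
  have hpb := parity_mod n b
  unfold vtx at h
  by_cases ha : a % 2 = 0 <;> by_cases hb : b % 2 = 0
  · rw [if_pos ha, if_pos hb, Prod.mk.injEq, Fin.ext_iff] at h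
    unfold hIdx at h
    have h1 := h.1
    simp only at h1
    have hla := Nat.mod_lt a (show 0 < 2 * n by omega)
    have hlb := Nat.mod_lt b (show 0 < 2 * n by omega)
    omega
  · rw [if_pos ha, if_neg hb, Prod.mk.injEq] at h
    exact absurd h.2 (by simp)
  · rw [if_neg ha, if_pos hb, Prod.mk.injEq] at h
    exact absurd h.2 (by simp)
  · rw [if_neg ha, if_neg hb, Prod.mk.injEq, Fin.ext_iff] at h
    unfold hIdx at h
    have h1 := h.1
    simp only at h1
    have hpa2 := parity_mod n (a + (2 * n - d))
    have hpb2 := parity_mod n (b + (2 * n - d))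
    have hla := Nat.mod_lt (a + (2 * n - d)) (show 0 < 2 * n by omega)
    have hlb := Nat.mod_lt (b + (2 * n - d)) (show 0 < 2 * n by omega)
    have h2 : (a + (2 * n - d)) % (2 * n) = (b + (2 * n - d)) % (2 * n) := by omega
    have h3 : a ≡ b [MOD 2 * n] := Nat.ModEq.add_right_cancel' (2 * n - d) h2
    exact h3

lemma vtx_per {n : ℕ} (hn : 0 < n) (d : ℕ) :
    ∀ a, vtx n hn d (a % (2 * n)) = vtx n hn d a := by
  intro a
  have hpar := parity_mod n a
  unfold vtx hIdx
  have e1 : (a % (2 * n)) % (2 * n) = a % (2 * n) := Nat.mod_mod_of_dvd _ dvd_rfl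
  have e2 : (a % (2 * n) + (2 * n - d)) % (2 * n) = (a + (2 * n - d)) % (2 * n) :=
    Nat.mod_add_mod a (2 * n) _
  by_cases h : a % 2 = 0
  · rw [if_pos (by omega), if_pos h]
    simp only [Prod.mk.injEq, Fin.ext_iff, e1, and_self]
  · rw [if_neg (by omega), if_neg h]
    simp only [Prod.mk.injEq, Fin.ext_iff, e2, and_self]

-- ===== window structure lemmas =====

lemma count_parity (m x : ℕ) :
    ((Finset.range m).filter (fun r => (x + r) % 2 = 0)).card
      = (if x % 2 = 0 then (m + 1) / 2 else m / 2) := by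
  induction m with
  | zero => simp
  | succ m ih =>
    rw [Finset.range_add_one, Finset.filter_insert]
    by_cases h : (x + m) % 2 = 0
    · rw [if_pos h, Finset.card_insert_of_notMem (by simp), ih]
      split_ifs with h2 <;> omega
    · rw [if_neg h, ih]
      split_ifs with h2 <;> omega

lemma fullSet_Wnd {n k : ℕ} (hn : 0 < n) {d : ℕ} (hd2 : d % 2 = 1) (hdk : d ≤ k)
    (hkn : k ≤ n) (hsafe : k + d ≤ 2 * n) (x : ℕ) :
    fullSet (Wnd (vtx n hn d) k x)
      = ((Finset.range (k - d)).filter (fun r => (x + r) % 2 = 0)).image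
          (fun r => hIdx n hn (x + r)) := by
  ext i
  simp only [fullSet, Finset.mem_filter, Finset.mem_univ, true_and, mem_Wnd,
    Finset.mem_image, Finset.mem_range]
  constructor
  · rintro ⟨⟨r1, hr1, he1⟩, ⟨r2, hr2, he2⟩⟩
    rw [vtx_eq_false_iff] at he1
    rw [vtx_eq_true_iff hn hd2 (by omega)] at he2
    obtain ⟨he2a, he2b⟩ := he2
    have hmod : (x + r2 + (2 * n - d)) % (2 * n) = (x + r1) % (2 * n) := by
      rw [he2a, he1]
    have h3 : (x + r2 + (2 * n - d) + d) % (2 * n) = (x + r1 + d) % (2 * n) :=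
      Nat.ModEq.add_right d hmod
    have h4 : x + r2 + (2 * n - d) + d = x + r2 + 2 * n := by omega
    rw [h4, Nat.add_mod_right] at h3
    -- (x + r2) % (2n) = (x + (r1 + d)) % (2n)
    have h5 : r2 = r1 + d := by
      apply mod_inj_small (N := 2 * n) (by omega) (by omega)
      rw [h3]; ring_nf
    have hpar : (x + r1) % 2 = 0 := by
      have := parity_mod n (x + r1)
      omega
    refine ⟨r1, ⟨by omega, hpar⟩, ?_⟩
    rw [Fin.ext_iff]
    unfold hIdx
    simp only
    omega
  · rintro ⟨r, ⟨hrk, hrp⟩, rfl⟩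
    have hu := Nat.mod_lt (x + r) (show 0 < 2 * n by omega)
    have hupar := parity_mod n (x + r)
    constructor
    · refine ⟨r, by omega, ?_⟩
      rw [vtx_eq_false_iff]
      unfold hIdx
      simp only
      omega
    · refine ⟨r + d, by omega, ?_⟩
      rw [vtx_eq_true_iff hn hd2 (by omega)]
      constructor
      · have h4 : x + (r + d) + (2 * n - d) = x + r + 2 * n := by omega
        rw [h4, Nat.add_mod_right]
        unfold hIdx
        simp only
        omega
      · omega

lemma fullSet_Wnd_card {n k : ℕ} (hn : 0 < n) {d : ℕ} (hd2 : d % 2 = 1) (hdk : d ≤ k)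
    (hkn : k ≤ n) (hsafe : k + d ≤ 2 * n) (x : ℕ) :
    (fullSet (Wnd (vtx n hn d) k x)).card
      = ((Finset.range (k - d)).filter (fun r => (x + r) % 2 = 0)).card := by
  rw [fullSet_Wnd hn hd2 hdk hkn hsafe x]
  apply Finset.card_image_of_injOn
  intro r hr r' hr' h
  simp only [Finset.coe_filter, Finset.mem_range, Set.mem_setOf_eq] at hr hr'
  rw [Fin.ext_iff] at h
  unfold hIdx at h
  simp only at h
  have h1 := parity_mod n (x + r)
  have h2 := parity_mod n (x + r')
  have h3 : (x + r) % (2 * n) = (x + r') % (2 * n) := by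
    have hu := Nat.mod_lt (x + r) (show 0 < 2 * n by omega)
    have hu' := Nat.mod_lt (x + r') (show 0 < 2 * n by omega)
    omega
  exact mod_inj_small (by omega) (by omega) h3

-- ===== the p = 0 construction =====

def vtx0 (n : ℕ) (hn : 0 < n) (a : ℕ) : Fin n × Bool :=
  (⟨(a % (2 * n)) % n, Nat.mod_lt _ hn⟩, decide (n ≤ a % (2 * n)))

lemma mod_n_of_lt_two_n {n u : ℕ} (hn : 0 < n) (hu : u < 2 * n) :
    u % n = if n ≤ u then u - n else u := by
  split_ifs with h
  · rw [Nat.mod_eq_sub_mod h, Nat.mod_eq_of_lt (by omega)]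
  · exact Nat.mod_eq_of_lt (by omega)

lemma vtx0_inj {n : ℕ} (hn : 0 < n) :
    ∀ a b, vtx0 n hn a = vtx0 n hn b → a % (2 * n) = b % (2 * n) := by
  intro a b h
  unfold vtx0 at h
  rw [Prod.mk.injEq, Fin.ext_iff] at h
  simp only [decide_eq_decide] at h
  have ha := Nat.mod_lt a (show 0 < 2 * n by omega)
  have hb := Nat.mod_lt b (show 0 < 2 * n by omega)
  have h1 := mod_n_of_lt_two_n hn ha
  have h2 := mod_n_of_lt_two_n hn hb
  obtain ⟨hv, hbo⟩ := h
  by_cases hc : n ≤ a % (2 * n)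
  · have hc' : n ≤ b % (2 * n) := hbo.mp hc
    rw [if_pos hc] at h1; rw [if_pos hc'] at h2
    omega
  · have hc' : ¬ n ≤ b % (2 * n) := fun hx => hc (hbo.mpr hx)
    rw [if_neg hc] at h1; rw [if_neg hc'] at h2
    omega

lemma vtx0_per {n : ℕ} (hn : 0 < n) :
    ∀ a, vtx0 n hn (a % (2 * n)) = vtx0 n hn a := by
  intro a
  unfold vtx0
  rw [Prod.mk.injEq, Fin.ext_iff]
  simp only [Nat.mod_mod_of_dvd _ dvd_rfl, and_self]

lemma fullSet_Wnd0 {n k : ℕ} (hn : 0 < n) (hkn : k ≤ n) (x : ℕ) :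
    fullSet (Wnd (vtx0 n hn) k x) = ∅ := by
  ext i
  simp only [fullSet, Finset.mem_filter, Finset.mem_univ, true_and,
    Finset.notMem_empty, iff_false, not_and]
  intro hf ht
  rw [mem_Wnd] at hf ht
  obtain ⟨r1, hr1, he1⟩ := hf
  obtain ⟨r2, hr2, he2⟩ := ht
  unfold vtx0 at he1 he2
  rw [Prod.mk.injEq, Fin.ext_iff] at he1 he2
  simp only [decide_eq_false_iff_not, decide_eq_true_eq] at he1 he2
  have ha := Nat.mod_lt (x + r1) (show 0 < 2 * n by omega)
  have hb := Nat.mod_lt (x + r2) (show 0 < 2 * n by omega)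
  have h1 := mod_n_of_lt_two_n hn ha
  have h2 := mod_n_of_lt_two_n hn hb
  rw [if_neg he1.2] at h1
  rw [if_pos he2.2] at h2
  -- (x + r2) % 2n = (x + r1) % 2n + n
  have h3 : (x + r2) % (2 * n) = (x + r1) % (2 * n) + n := by omega
  have h4 : (x + (r1 + n)) % (2 * n) = (x + r1) % (2 * n) + n := by
    conv_lhs => rw [show x + (r1 + n) = (x + r1) + n by ring]
    rw [← Nat.mod_add_mod]
    exact Nat.mod_eq_of_lt (by omega)
  have h5 : r2 = r1 + n := mod_inj_small (N := 2 * n) (x := x) (by omega) (by omega) (by omega)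
  omega

-- ===== assembly =====

lemma assembled {n p s : ℕ} (h1 : 1 ≤ 2 * p + s) (h2 : 2 * p + s ≤ n)
    (F : Finset (Finset (Fin n × Bool))) (hF : F ⊆ matchFamily n p s)
    (hint : IsIntersecting F)
    (vA : ℕ → Fin n × Bool)
    (hinj : ∀ a b, vA a = vA b → a % (2 * n) = b % (2 * n))
    (hper : ∀ a, vA (a % (2 * n)) = vA a)
    (c m t : ℕ) (hc : c * m = 2 * n) (hck : c * t = 2 * p + s)
    (hmem : ∀ j : Fin m, Wnd vA (2 * p + s) (c * j.val) ∈ matchFamily n p s) :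
    2 * n * F.card ≤ (2 * p + s) * (matchFamily n p s).card := by
  have hn : 0 < n := by omega
  have hkey : m * F.card ≤ t * (matchFamily n p s).card := by
    apply count_lemma (matchFamily n p s) F hF hint (wrG n)
      (fun g hg h hh => wrG_mul hg hh) (fun g hg => wrG_inv hg)
      (fun g hg A hA => by
        obtain ⟨π, ε, rfl⟩ := mem_wrG.mp hg
        exact matchFamily_image π ε hA)
      (fun A hA B hB => matchFamily_trans hA hB)
      m t (fun j => Wnd vA (2 * p + s) (c * j.val)) hmem
    intro S hS
    exact katona_bound vA hinj hper h1 h2 hn c m t hc hck S hS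
  calc 2 * n * F.card = c * m * F.card := by rw [hc]
    _ = c * (m * F.card) := by ring
    _ ≤ c * (t * (matchFamily n p s).card) := Nat.mul_le_mul_left c hkey
    _ = (c * t) * (matchFamily n p s).card := by ring
    _ = (2 * p + s) * (matchFamily n p s).card := by rw [hck]

/-- For `1 ≤ 2p+s ≤ n`, every intersecting family `F ⊆ H^{(p,s)}(n)` satisfies
`2n·|F| ≤ (2p+s)·C(n,p)·C(n-p,s)·2^s`. -/
theorem matchFamily_intersecting_bound (n p s : ℕ) (h1 : 1 ≤ 2 * p + s) (h2 : 2 * p + s ≤ n)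
    (F : Finset (Finset (Fin n × Bool))) (hF : F ⊆ matchFamily n p s)
    (hint : IsIntersecting F) :
    2 * n * F.card ≤ (2 * p + s) * (n.choose p * (n - p).choose s * 2 ^ s) := by
  have hn : 0 < n := by omega
  have main : 2 * n * F.card ≤ (2 * p + s) * (matchFamily n p s).card := by
    rcases Nat.eq_zero_or_pos p with rfl | hp
    · -- p = 0 : use vtx0
      apply assembled h1 h2 F hF hint (vtx0 n hn) (vtx0_inj hn) (vtx0_per hn)
        1 (2 * n) (2 * 0 + s) (by ring) (by ring)
      intro j
      rw [mem_matchFamily_iff]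
      constructor
      · exact Wnd_card _ (vtx0_inj hn) (by omega) hn _
      · rw [fullSet_Wnd0 hn (by omega)]
        simp
    · rcases Nat.even_or_odd s with hs | hs
      · -- s even, p ≥ 1 : d = s + 1, c = 2
        have hs2 : s % 2 = 0 := Nat.even_iff.mp hs
        have hd2 : (s + 1) % 2 = 1 := by omega
        apply assembled h1 h2 F hF hint (vtx n hn (s + 1))
          (vtx_inj hn hd2 (by omega)) (vtx_per hn (s + 1))
          2 n (p + s / 2) (by ring) (by omega)
        intro j
        rw [mem_matchFamily_iff]
        constructor
        · exact Wnd_card _ (vtx_inj hn hd2 (by omega)) (by omega) hn _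
        · rw [fullSet_Wnd_card hn hd2 (by omega) (by omega) (by omega) _, count_parity]
          have : (2 * j.val) % 2 = 0 := by omega
          rw [if_pos this]
          omega
      · -- s odd : d = s, c = 1
        have hs2 : s % 2 = 1 := Nat.odd_iff.mp hs
        apply assembled h1 h2 F hF hint (vtx n hn s)
          (vtx_inj hn hs2 (by omega)) (vtx_per hn s)
          1 (2 * n) (2 * p + s) (by ring) (by ring)
        intro j
        rw [mem_matchFamily_iff]
        constructor
        · exact Wnd_card _ (vtx_inj hn hs2 (by omega)) (by omega) hn _
        · rw [fullSet_Wnd_card hn hs2 (by omega) (by omega) (by omega) _, count_parity]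
          split_ifs with hpar <;> omega
  calc 2 * n * F.card ≤ (2 * p + s) * (matchFamily n p s).card := main
    _ ≤ (2 * p + s) * (n.choose p * ((n - p).choose s * 2 ^ s)) :=
        Nat.mul_le_mul_left _ (matchFamily_card_le n p s)
    _ = (2 * p + s) * (n.choose p * (n - p).choose s * 2 ^ s) := by ring
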